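/- Let X_n ~ Binomial(n, p) and Y_n ~ Binomial(n, q) be independent with 0 < p < q < 1, and let F_{X_n} be the distribution function of X_n. Then F_{X_n}(Y_n) converges in probability to 1 as n → ∞. -/

import Mathlib

open MeasureTheory ProbabilityTheory Filter
open Finset unitInterval
open scoped ENNReal

lemma binom_pmf_toReal (r : ℝ≥0∞) (hr : r ≤ 1) (n : ℕ) (k : Fin (n+1)) (x : I)
    (hx : (x:ℝ) = r.toReal) :
    (PMF.binomial r.toNNReal (ENNReal.toNNReal_one ▸ ENNReal.toNNReal_mono ENNReal.one_ne_top hr) n k).toReal = bernstein n k x := by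
  rw [PMF.binomial_apply, bernstein_apply, ENNReal.coe_toNNReal (hr.trans_lt ENNReal.one_lt_top).ne]
  rw [ENNReal.toReal_mul, ENNReal.toReal_mul, ENNReal.toReal_pow, ENNReal.toReal_pow,
    ENNReal.toReal_natCast, ENNReal.toReal_sub_of_le hr ENNReal.one_ne_top,
    ENNReal.toReal_one, Fin.val_last, hx]
  ring

lemma binom_map_apply (r : ℝ≥0∞) (hr : r ≤ 1) (n : ℕ) (Sp : ℕ → Prop) [DecidablePred Sp] :
    (Measure.map (fun i : Fin (n + 1) => (i : ℕ)) (PMF.binomial r.toNNReal (ENNReal.toNNReal_one ▸ ENNReal.toNNReal_mono ENNReal.one_ne_top hr) n).toMeasure) {m | Sp m}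
      = ∑ k ∈ univ.filter (fun k : Fin (n+1) => Sp (k : ℕ)), PMF.binomial r.toNNReal (ENNReal.toNNReal_one ▸ ENNReal.toNNReal_mono ENNReal.one_ne_top hr) n k := by
  rw [Measure.map_apply (measurable_of_countable _) (by trivial),
    PMF.toMeasure_apply _ (by measurability)]
  rw [tsum_fintype, Finset.sum_filter]
  congr 1 with k
  by_cases h : Sp (k:ℕ) <;> simp [Set.indicator_apply, Set.mem_setOf_eq, h]

lemma binom_map_toReal (r : ℝ≥0∞) (hr : r ≤ 1) (n : ℕ) (Sp : ℕ → Prop) [DecidablePred Sp] (x : I)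
    (hx : (x:ℝ) = r.toReal) :
    ((Measure.map (fun i : Fin (n + 1) => (i : ℕ))
        (PMF.binomial r.toNNReal (ENNReal.toNNReal_one ▸ ENNReal.toNNReal_mono ENNReal.one_ne_top hr) n).toMeasure) {m | Sp m}).toReal
      = ∑ k ∈ univ.filter (fun k : Fin (n+1) => Sp (k : ℕ)), bernstein n k x := by
  rw [binom_map_apply r hr n Sp, ENNReal.toReal_sum (fun k _ => PMF.apply_ne_top _ _)]
  exact Finset.sum_congr rfl fun k _ => binom_pmf_toReal r hr n k x hx

lemma bernstein_cheb {n : ℕ} (hn : 0 < n) (x : I) {c : ℝ} (hc : 0 < c) (A : Finset (Fin (n+1)))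
    (hA : ∀ k ∈ A, c ≤ |(x:ℝ) - (k:ℕ)/n|) :
    ∑ k ∈ A, bernstein n k x ≤ 1 / (c^2 * n) := by
  have hn' : (0:ℝ) < n := by exact_mod_cast hn
  have hvar := bernstein.variance hn.ne' x
  have hz : ∀ k : Fin (n+1), ((bernstein.z k : ℝ)) = (k:ℕ)/n := fun k => rfl
  calc ∑ k ∈ A, bernstein n k x
      ≤ ∑ k ∈ A, (((x:ℝ) - (k:ℕ)/n)/c)^2 * bernstein n k x := by
        refine Finset.sum_le_sum fun k hk => ?_
        have h1 : 1 ≤ (((x:ℝ) - (k:ℕ)/n)/c)^2 := by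
          rw [div_pow, one_le_div (by positivity)]
          calc c^2 ≤ |(x:ℝ) - (k:ℕ)/n|^2 := by
                have := hA k hk; nlinarith [abs_nonneg ((x:ℝ) - (k:ℕ)/n)]
            _ = ((x:ℝ) - (k:ℕ)/n)^2 := sq_abs _
        nlinarith [bernstein_nonneg (n := n) (ν := k) (x := x)]
    _ ≤ ∑ k : Fin (n+1), (((x:ℝ) - (k:ℕ)/n)/c)^2 * bernstein n k x := by
        refine Finset.sum_le_sum_of_subset_of_nonneg (Finset.subset_univ _) fun k _ _ => ?_
        have := bernstein_nonneg (n := n) (ν := k) (x := x); positivity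
    _ = (1/c^2) * ∑ k : Fin (n+1), ((x:ℝ) - (bernstein.z k : ℝ))^2 * bernstein n k x := by
        rw [Finset.mul_sum]; refine Finset.sum_congr rfl fun k _ => ?_
        rw [hz, div_pow]; ring
    _ = (1/c^2) * ((x:ℝ)*(1-(x:ℝ))/n) := by rw [hvar]
    _ ≤ 1 / (c^2 * n) := by
        have h0 : (0:ℝ) ≤ x := x.2.1
        have h1 : (x:ℝ) ≤ 1 := x.2.2
        have hx1 : (x:ℝ)*(1-(x:ℝ)) ≤ 1 := by nlinarith
        calc (1/c^2) * ((x:ℝ)*(1-(x:ℝ))/n) = ((x:ℝ)*(1-(x:ℝ)))/(c^2*n) := by ring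
          _ ≤ 1 / (c^2 * n) := by gcongr

/-- If `Xₙ ~ Binomial(n, p)` and `Yₙ ~ Binomial(n, q)` are independent with `0 < p < q < 1`,
then `F_{Xₙ}(Yₙ) → 1` in probability, where `F_{Xₙ}` is the distribution function of `Xₙ`. -/
theorem binom_cdf_at_binom_tendsto_one {Ω : Type*} [MeasurableSpace Ω] (P : Measure Ω)
    [IsProbabilityMeasure P]
    (p q : ℝ≥0∞) (hp1 : p ≤ 1) (hq1 : q ≤ 1)
    (hp0 : 0 < p) (hpq : p < q) (hq : q < 1)
    (X Y : ℕ → Ω → ℕ)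
    (hXmeas : ∀ n, Measurable (X n)) (hYmeas : ∀ n, Measurable (Y n))
    (hXdist : ∀ n, Measure.map (X n) P
      = Measure.map (fun i : Fin (n + 1) => (i : ℕ)) (PMF.binomial p.toNNReal (by simpa using ENNReal.toNNReal_mono ENNReal.one_ne_top hp1) n).toMeasure)
    (hYdist : ∀ n, Measure.map (Y n) P
      = Measure.map (fun i : Fin (n + 1) => (i : ℕ)) (PMF.binomial q.toNNReal (by simpa using ENNReal.toNNReal_mono ENNReal.one_ne_top hq1) n).toMeasure)
    (hindep : ∀ n, IndepFun (X n) (Y n) P) :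
    ∀ ε : ℝ, 0 < ε →
      Tendsto (fun n : ℕ =>
          P {ω | (P {ω' | X n ω' ≤ Y n ω}).toReal < 1 - ε}) atTop (nhds 0) := by
  intro ε hε
  have hpt : p ≠ ⊤ := (hp1.trans_lt ENNReal.one_lt_top).ne
  have hqt : q ≠ ⊤ := (hq1.trans_lt ENNReal.one_lt_top).ne
  set pr := p.toReal with hpr_def
  set qr := q.toReal with hqr_def
  have hpr0 : 0 < pr := ENNReal.toReal_pos hp0.ne' hpt
  have hprqr : pr < qr := (ENNReal.toReal_lt_toReal hpt hqt).mpr hpq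
  have hqr1 : qr < 1 := by
    have := (ENNReal.toReal_lt_toReal hqt ENNReal.one_ne_top).mpr hq
    simpa using this
  have hpr1 : pr ≤ 1 := by linarith
  have hqr0 : 0 ≤ qr := by linarith
  set c : ℝ := (qr - pr)/2 with hc_def
  set m : ℝ := (pr + qr)/2 with hm_def
  have hc : 0 < c := by rw [hc_def]; linarith
  have hcpm : c + pr = m := by rw [hc_def, hm_def]; ring
  have hqcm : qr - c = m := by rw [hc_def, hm_def]; ring
  set xp : I := ⟨pr, ⟨le_of_lt hpr0, hpr1⟩⟩ with hxp_def
  set xq : I := ⟨qr, ⟨hqr0, le_of_lt hqr1⟩⟩ with hxq_def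
  set t : ℕ → ℕ := fun n => ⌈m * n⌉₊ with ht_def
  set Rp : ℕ → ℝ := fun n =>
    ∑ k ∈ univ.filter (fun k : Fin (n+1) => t n < (k:ℕ)), bernstein n k xp with hRp_def
  set Rq : ℕ → ℝ := fun n =>
    ∑ k ∈ univ.filter (fun k : Fin (n+1) => (k:ℕ) < t n), bernstein n k xq with hRq_def
  -- tail bounds via Chebyshev
  have hRp_le : ∀ n : ℕ, 1 ≤ n → Rp n ≤ 1/(c^2*n) := by
    intro n hn
    refine bernstein_cheb hn xp hc _ fun k hk => ?_
    simp only [Finset.mem_filter] at hk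
    have hn' : (0:ℝ) < n := by exact_mod_cast hn
    have hk' : (t n : ℝ) + 1 ≤ (k:ℕ) := by exact_mod_cast hk.2
    have h1 : m * n ≤ (t n : ℝ) := Nat.le_ceil _
    rw [abs_sub_comm, le_abs]
    left
    rw [le_sub_iff_add_le]
    show c + (xp:ℝ) ≤ (k:ℕ)/n
    rw [hxp_def, le_div_iff₀ hn']
    simp only []
    rw [hcpm]
    linarith
  have hRq_le : ∀ n : ℕ, 1 ≤ n → Rq n ≤ 1/(c^2*n) := by
    intro n hn
    refine bernstein_cheb hn xq hc _ fun k hk => ?_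
    simp only [Finset.mem_filter] at hk
    have hn' : (0:ℝ) < n := by exact_mod_cast hn
    have hk' : ((k:ℕ):ℝ) + 1 ≤ (t n : ℝ) := by exact_mod_cast hk.2
    have h1 : (t n : ℝ) < m * n + 1 := Nat.ceil_lt_add_one (by positivity)
    rw [le_abs]
    left
    show c ≤ (xq:ℝ) - (k:ℕ)/n
    rw [hxq_def]
    simp only []
    rw [le_sub_comm, div_le_iff₀ hn']
    nlinarith
  -- key lower bound on the conditional cdf
  have key : ∀ (n : ℕ) (ω : Ω), t n ≤ Y n ω →
      1 - Rp n ≤ (P {ω' | X n ω' ≤ Y n ω}).toReal := by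
    intro n ω hω
    have hmap : P {ω' | X n ω' ≤ Y n ω}
        = (Measure.map (X n) P) {m | m ≤ Y n ω} := by
      rw [Measure.map_apply (hXmeas n) (by trivial)]
      rfl
    rw [hmap, hXdist n,
      binom_map_toReal p hp1 n (fun m => m ≤ Y n ω) xp (by rw [hxp_def])]
    have hsplit :
        (∑ k ∈ univ.filter (fun k : Fin (n+1) => (k:ℕ) ≤ t n), bernstein n k xp) + Rp n = 1 := by
      rw [hRp_def]
      have := Finset.sum_filter_add_sum_filter_not (Finset.univ : Finset (Fin (n+1)))
        (fun k : Fin (n+1) => (k:ℕ) ≤ t n) (fun k => bernstein n k xp)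
      simp only [not_le] at this
      rw [this, bernstein.probability]
    have hmono :
        (∑ k ∈ univ.filter (fun k : Fin (n+1) => (k:ℕ) ≤ t n), bernstein n k xp)
          ≤ ∑ k ∈ univ.filter (fun k : Fin (n+1) => (k:ℕ) ≤ Y n ω), bernstein n k xp := by
      refine Finset.sum_le_sum_of_subset_of_nonneg ?_ fun k _ _ => bernstein_nonneg
      intro k hk
      simp only [Finset.mem_filter] at *
      exact ⟨hk.1, hk.2.trans hω⟩
    linarith
  -- inclusion of the bad event
  have incl : ∀ n : ℕ, Rp n ≤ ε →
      {ω | (P {ω' | X n ω' ≤ Y n ω}).toReal < 1 - ε} ⊆ {ω | Y n ω < t n} := by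
    intro n hR ω hω
    simp only [Set.mem_setOf_eq] at hω ⊢
    by_contra h
    push_neg at h
    have := key n ω h
    linarith
  -- upper bound on the bad-event probability
  have hub : ∀ n : ℕ, 1 ≤ n → Rp n ≤ ε →
      P {ω | (P {ω' | X n ω' ≤ Y n ω}).toReal < 1 - ε} ≤ ENNReal.ofReal (1/(c^2*n)) := by
    intro n hn hR
    have hprob : IsProbabilityMeasure
        (Measure.map (fun i : Fin (n + 1) => (i : ℕ)) (PMF.binomial q.toNNReal (by simpa using ENNReal.toNNReal_mono ENNReal.one_ne_top hq1) n).toMeasure) :=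
      Measure.isProbabilityMeasure_map (measurable_of_countable _).aemeasurable
    calc P {ω | (P {ω' | X n ω' ≤ Y n ω}).toReal < 1 - ε}
        ≤ P {ω | Y n ω < t n} := measure_mono (incl n hR)
      _ = (Measure.map (Y n) P) {m | m < t n} := by
          rw [Measure.map_apply (hYmeas n) (by trivial)]
          rfl
      _ = (Measure.map (fun i : Fin (n + 1) => (i : ℕ))
            (PMF.binomial q.toNNReal (by simpa using ENNReal.toNNReal_mono ENNReal.one_ne_top hq1) n).toMeasure) {m | m < t n} := by rw [hYdist n]
      _ = ENNReal.ofReal (((Measure.map (fun i : Fin (n + 1) => (i : ℕ))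
            (PMF.binomial q.toNNReal (by simpa using ENNReal.toNNReal_mono ENNReal.one_ne_top hq1) n).toMeasure) {m | m < t n}).toReal) :=
          (ENNReal.ofReal_toReal (measure_ne_top _ _)).symm
      _ ≤ ENNReal.ofReal (1/(c^2*n)) := by
          refine ENNReal.ofReal_le_ofReal ?_
          rw [binom_map_toReal q hq1 n (fun m => m < t n) xq (by rw [hxq_def])]
          exact hRq_le n hn
  -- the dominating sequence tends to zero
  have hdom : Tendsto (fun n : ℕ => 1/(c^2*(n:ℝ))) atTop (nhds 0) := by
    have h := tendsto_const_div_atTop_nhds_zero_nat (1/c^2)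
    have heq : (fun n : ℕ => 1/c^2/(n:ℝ)) = fun n : ℕ => 1/(c^2*(n:ℝ)) := by
      funext n; rw [div_div]
    rwa [heq] at h
  have hdom' : Tendsto (fun n : ℕ => ENNReal.ofReal (1/(c^2*(n:ℝ)))) atTop (nhds 0) := by
    have := ENNReal.tendsto_ofReal hdom
    simpa using this
  -- eventually Rp n ≤ ε
  have hev : ∀ᶠ n : ℕ in atTop, 1 ≤ n ∧ Rp n ≤ ε := by
    filter_upwards [eventually_ge_atTop 1, hdom.eventually (gt_mem_nhds hε)] with n hn hlt
    exact ⟨hn, (hRp_le n hn).trans hlt.le⟩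
  refine tendsto_of_tendsto_of_tendsto_of_le_of_le' tendsto_const_nhds hdom'
    (Eventually.of_forall fun n => zero_le) ?_
  filter_upwards [hev] with n hn
  exact hub n hn.1 hn.2
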